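/- Let N ≥ 1, l ≤ L be natural numbers and let h : Fin (l+1) → ℂ be a nonzero channel tap vector. Then the N × (N+L) banded Toeplitz matrix T defined by T i j = h (L+i−j) when 0 ≤ L+i−j ≤ l and T i j = 0 otherwise has rank N (full row rank). -/

import Mathlib

open Matrix

/-- The `N × (N+L)` banded Toeplitz channel matrix built from the taps `h`:
`T i j = h (L + i - j)` when `0 ≤ L + i - j ≤ l`, and `0` otherwise. -/
noncomputable def bandedToeplitz (N l L : ℕ) (h : Fin (l + 1) → ℂ) :
    Matrix (Fin N) (Fin (N + L)) ℂ :=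
  Matrix.of fun i j =>
    if hij : j.val ≤ L + i.val ∧ L + i.val - j.val ≤ l then
      h ⟨L + i.val - j.val, by omega⟩
    else 0

/-- the banded Toeplitz matrix of a nonzero tap vector has full row
rank `N`. -/
theorem bandedToeplitz_rank (N l L : ℕ) (hN : 1 ≤ N) (hlL : l ≤ L)
    (h : Fin (l + 1) → ℂ) (hh : h ≠ 0) :
    (bandedToeplitz N l L h).rank = N := by
  classical
  set T := bandedToeplitz N l L h with hT
  -- choose maximal tap index k with h k ≠ 0
  have hS : (Finset.univ.filter fun i : Fin (l+1) => h i ≠ 0).Nonempty := by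
    rcases Function.ne_iff.mp hh with ⟨i, hi⟩
    exact ⟨i, Finset.mem_filter.mpr ⟨Finset.mem_univ _, hi⟩⟩
  set k := (Finset.univ.filter fun i : Fin (l+1) => h i ≠ 0).max' hS with hk
  have hk0 : h k ≠ 0 := by
    have := (Finset.univ.filter fun i : Fin (l+1) => h i ≠ 0).max'_mem hS
    simpa using this
  have hkmax : ∀ m : Fin (l+1), k < m → h m = 0 := by
    intro m hm
    by_contra hm0
    have : m ≤ k := Finset.le_max' _ m (by simp [hm0])
    exact absurd hm (not_lt.mpr this)
  have hkl : (k : ℕ) ≤ l := by omega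
  -- column selection
  have hg : ∀ i : Fin N, L + i.val - k.val < N + L := by
    intro i; have := i.isLt; omega
  set g : Fin N → Fin (N + L) := fun i => ⟨L + i.val - k.val, hg i⟩ with hgdef
  set M : Matrix (Fin N) (Fin N) ℂ := T.submatrix id g with hM
  -- M is upper triangular with diagonal h k
  have hdiag : ∀ i : Fin N, M i i = h k := by
    intro i
    have hgi : ((g i : Fin (N+L)) : ℕ) = L + i.val - k.val := rfl
    have h1 : ((g i : Fin (N+L)) : ℕ) ≤ L + i.val := by omega
    have h2 : L + i.val - ((g i : Fin (N+L)) : ℕ) = k.val := by omega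
    simp only [hM, Matrix.submatrix_apply, id_eq, hT, bandedToeplitz, Matrix.of_apply]
    rw [dif_pos ⟨h1, by omega⟩]
    exact congrArg h (Fin.ext (by simp only [h2]))
  have hlow : ∀ i j : Fin N, j < i → M i j = 0 := by
    intro i j hij
    have hij' : j.val < i.val := hij
    simp only [hM, Matrix.submatrix_apply, id_eq, hT, bandedToeplitz, Matrix.of_apply, hgdef]
    by_cases hc : (L + j.val - k.val : ℕ) ≤ L + i.val ∧ L + i.val - (L + j.val - k.val) ≤ l
    · rw [dif_pos hc]
      apply hkmax
      show (k : ℕ) < L + i.val - (L + j.val - k.val)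
      omega
    · rw [dif_neg hc]
  have hdet : M.det ≠ 0 := by
    rw [Matrix.det_of_upperTriangular hlow]
    have : ∀ i : Fin N, M i i ≠ 0 := fun i => by rw [hdiag i]; exact hk0
    exact Finset.prod_ne_zero_iff.mpr fun i _ => this i
  have hrankM : M.rank = N := by
    have : IsUnit M := (Matrix.isUnit_iff_isUnit_det M).mpr (isUnit_iff_ne_zero.mpr hdet)
    simpa using Matrix.rank_of_isUnit M this
  -- M = T * E, so rank T ≥ rank M
  set E : Matrix (Fin (N + L)) (Fin N) ℂ := fun j i => if g i = j then 1 else 0 with hE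
  have hME : M = T * E := by
    ext i j
    simp only [hM, Matrix.submatrix_apply, id_eq, Matrix.mul_apply]
    simp only [hE]
    rw [Finset.sum_eq_single (g j)]
    · simp
    · intro b _ hb; simp [Ne.symm hb]
    · simp
  have h1 : M.rank ≤ T.rank := by
    rw [hME]; exact Matrix.rank_mul_le_left T E
  have h2 : T.rank ≤ N := Matrix.rank_le_card_height T |>.trans (by simp)
  omega
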